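/- Let X₁, X₂ be Hilbert spaces and T : X₁ → X₂ a bounded linear operator. Then Gr(−T) ∩ Gr(T)^⊥ = Gr(−T restricted to ker(I − T*T)) and Gr(−T)^⊥ ∩ Gr(T) = Gr(T restricted to ker(I − T*T)); in particular, dim(Gr(−T) ∩ Gr(T)^⊥) = dim(ker(I − T*T)) = dim(Gr(−T)^⊥ ∩ Gr(T)). -/

import Mathlib

open ContinuousLinearMap

theorem stmt_18 {E : Type u} [NormedAddCommGroup E] [InnerProductSpace ℝ E] [CompleteSpace E]
    {F : Type u} [NormedAddCommGroup F] [InnerProductSpace ℝ F] [CompleteSpace F]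
    (T : E →L[ℝ] F) :
    let Φ : WithLp 2 (E × F) →ₗ[ℝ] E × F := (WithLp.linearEquiv 2 ℝ (E × F) : WithLp 2 (E × F) →ₗ[ℝ] E × F)
    let GrT : Submodule ℝ (WithLp 2 (E × F)) := Submodule.comap Φ (LinearMap.graph (T : E →ₗ[ℝ] F))
    let GrmT : Submodule ℝ (WithLp 2 (E × F)) := Submodule.comap Φ (LinearMap.graph ((-T : E →L[ℝ] F) : E →ₗ[ℝ] F))
    let V : Submodule ℝ E := LinearMap.ker ((ContinuousLinearMap.id ℝ E - ContinuousLinearMap.adjoint T ∘L T : E →L[ℝ] E) : E →ₗ[ℝ] E)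
    GrmT ⊓ GrTᗮ =
        Submodule.comap Φ (LinearMap.graph ((-T : E →L[ℝ] F) : E →ₗ[ℝ] F) ⊓ V.prod ⊤) ∧
      GrmTᗮ ⊓ GrT = Submodule.comap Φ (LinearMap.graph (T : E →ₗ[ℝ] F) ⊓ V.prod ⊤) ∧
      Module.rank ℝ (GrmT ⊓ GrTᗮ : Submodule ℝ (WithLp 2 (E × F))) = Module.rank ℝ V ∧
      Module.rank ℝ (GrmTᗮ ⊓ GrT : Submodule ℝ (WithLp 2 (E × F))) = Module.rank ℝ V := by
  intro Φ GrT GrmT V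
  -- membership in a graph comap
  have hmem : ∀ (S : E →L[ℝ] F) (x : WithLp 2 (E × F)),
      x ∈ Submodule.comap Φ (LinearMap.graph (S : E →ₗ[ℝ] F)) ↔ x.ofLp.2 = S x.ofLp.1 := by
    intro S x
    exact LinearMap.mem_graph_iff _ _
  -- characterize the orthogonal complement of a graph
  have horth : ∀ (S : E →L[ℝ] F) (x : WithLp 2 (E × F)),
      x ∈ (Submodule.comap Φ (LinearMap.graph (S : E →ₗ[ℝ] F)))ᗮ ↔
        x.ofLp.1 + ContinuousLinearMap.adjoint S x.ofLp.2 = 0 := by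
    intro S x
    rw [Submodule.mem_orthogonal]
    constructor
    · intro h
      have key : ∀ a : E, inner ℝ a (x.ofLp.1 + ContinuousLinearMap.adjoint S x.ofLp.2) = (0:ℝ) := by
        intro a
        have hu : WithLp.toLp 2 (a, S a) ∈
            Submodule.comap Φ (LinearMap.graph (S : E →ₗ[ℝ] F)) := by
          rw [hmem]
        have := h _ hu
        rw [WithLp.prod_inner_apply] at this
        rw [inner_add_right, ContinuousLinearMap.adjoint_inner_right]
        exact this
      have := key (x.ofLp.1 + ContinuousLinearMap.adjoint S x.ofLp.2)
      rwa [inner_self_eq_zero] at this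
    · intro h u hu
      rw [hmem] at hu
      rw [WithLp.prod_inner_apply, hu]
      have : inner ℝ (S u.ofLp.1) x.ofLp.2 = inner ℝ u.ofLp.1 (ContinuousLinearMap.adjoint S x.ofLp.2) :=
        (ContinuousLinearMap.adjoint_inner_right S u.ofLp.1 x.ofLp.2).symm
      rw [this, ← inner_add_right, h, inner_zero_right]
  have hΦ1 : ∀ x : WithLp 2 (E × F), (Φ x).1 = x.ofLp.1 := fun _ => rfl
  have hΦ2 : ∀ x : WithLp 2 (E × F), (Φ x).2 = x.ofLp.2 := fun _ => rfl
  have hV : ∀ a : E, a ∈ V ↔ a - ContinuousLinearMap.adjoint T (T a) = 0 := by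
    intro a
    simp [V, LinearMap.mem_ker, sub_eq_zero]
  -- first set equality
  have h1 : GrmT ⊓ GrTᗮ =
      Submodule.comap Φ (LinearMap.graph ((-T : E →L[ℝ] F) : E →ₗ[ℝ] F) ⊓ V.prod ⊤) := by
    ext x
    rw [Submodule.mem_inf, hmem (-T), horth T, Submodule.mem_comap, Submodule.mem_inf,
      Submodule.mem_prod, hΦ1, hΦ2]
    constructor
    · rintro ⟨h2, h3⟩
      refine ⟨LinearMap.mem_graph_iff _ _ |>.2 h2, ?_, trivial⟩
      rw [hV]
      rw [h2] at h3
      simpa [sub_eq_add_neg] using h3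
    · rintro ⟨h2, h3, -⟩
      rw [LinearMap.mem_graph_iff] at h2
      replace h2 : x.ofLp.2 = (-T) x.ofLp.1 := h2
      refine ⟨h2, ?_⟩
      rw [hV] at h3
      rw [h2]
      simpa [sub_eq_add_neg] using h3
  have h2 : GrmTᗮ ⊓ GrT =
      Submodule.comap Φ (LinearMap.graph (T : E →ₗ[ℝ] F) ⊓ V.prod ⊤) := by
    ext x
    rw [Submodule.mem_inf, hmem T, horth (-T), Submodule.mem_comap, Submodule.mem_inf,
      Submodule.mem_prod, hΦ1, hΦ2]
    have hadj : ContinuousLinearMap.adjoint (-T) = -ContinuousLinearMap.adjoint T := by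
      simp
    constructor
    · rintro ⟨h3, h4⟩
      refine ⟨LinearMap.mem_graph_iff _ _ |>.2 h4, ?_, trivial⟩
      rw [hV]
      rw [h4, hadj] at h3
      simpa [sub_eq_add_neg] using h3
    · rintro ⟨h3, h4, -⟩
      rw [LinearMap.mem_graph_iff] at h3
      replace h3 : x.ofLp.2 = T x.ofLp.1 := h3
      refine ⟨?_, h3⟩
      rw [hV] at h4
      rw [h3, hadj]
      simpa [sub_eq_add_neg] using h4
  -- generic rank lemma
  have hrank : ∀ (S : E →L[ℝ] F) (P : Submodule ℝ (WithLp 2 (E × F))),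
      (∀ x : WithLp 2 (E × F), x ∈ P ↔ (x.ofLp.2 = S x.ofLp.1 ∧ x.ofLp.1 ∈ V)) →
      Module.rank ℝ P = Module.rank ℝ V := by
    intro S P hP
    let g : E →ₗ[ℝ] WithLp 2 (E × F) :=
      (WithLp.linearEquiv 2 ℝ (E × F)).symm.toLinearMap.comp
        (LinearMap.id.prod (S : E →ₗ[ℝ] F))
    have hmaps : ∀ v ∈ V, g v ∈ P := by
      intro v hv
      exact (hP (g v)).2 ⟨rfl, hv⟩
    have hinj : Function.Injective (g.restrict hmaps) := by
      intro a b hab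
      have : (g a.val) = (g b.val) := congrArg Subtype.val hab
      have h1 : (g a.val).ofLp.1 = (g b.val).ofLp.1 := congrArg (fun y => y.ofLp.1) this
      exact Subtype.ext h1
    have hsurj : Function.Surjective (g.restrict hmaps) := by
      rintro ⟨x, hx⟩
      obtain ⟨hx2, hx1⟩ := (hP x).1 hx
      refine ⟨⟨x.ofLp.1, hx1⟩, ?_⟩
      apply Subtype.ext
      show g x.ofLp.1 = x
      show WithLp.toLp 2 (x.ofLp.1, S x.ofLp.1) = x
      have : ((x.ofLp.1, x.ofLp.2) : E × F) = (x.ofLp.1, S x.ofLp.1) := Prod.ext rfl hx2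
      exact congrArg (WithLp.toLp 2) this.symm
    exact (LinearEquiv.ofBijective (g.restrict hmaps) ⟨hinj, hsurj⟩).rank_eq.symm
  have hP1 : ∀ x : WithLp 2 (E × F), x ∈ GrmT ⊓ GrTᗮ ↔ (x.ofLp.2 = (-T) x.ofLp.1 ∧ x.ofLp.1 ∈ V) := by
    intro x
    rw [Submodule.mem_inf, hmem (-T), horth T, hV]
    constructor
    · rintro ⟨ha, hb⟩
      refine ⟨ha, ?_⟩
      rw [ha] at hb
      simpa [sub_eq_add_neg] using hb
    · rintro ⟨ha, hb⟩
      refine ⟨ha, ?_⟩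
      rw [ha]
      simpa [sub_eq_add_neg] using hb
  have hP2 : ∀ x : WithLp 2 (E × F), x ∈ GrmTᗮ ⊓ GrT ↔ (x.ofLp.2 = T x.ofLp.1 ∧ x.ofLp.1 ∈ V) := by
    intro x
    rw [Submodule.mem_inf, hmem T, horth (-T), hV]
    have hadj : ContinuousLinearMap.adjoint (-T) = -ContinuousLinearMap.adjoint T := by simp
    rw [hadj]
    constructor
    · rintro ⟨ha, hb⟩
      refine ⟨hb, ?_⟩
      rw [hb] at ha
      simpa [sub_eq_add_neg] using ha
    · rintro ⟨ha, hb⟩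
      refine ⟨?_, ha⟩
      rw [ha]
      simpa [sub_eq_add_neg] using hb
  exact ⟨h1, h2, hrank (-T) _ hP1, hrank T _ hP2⟩
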